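/- Let f and q be polynomials in ℝ[x_1,…,x_n] such that q ∈ Q(1−x_1², 1−x_2², …, 1−x_n²)_r and r ≥ deg(f). Then f + ‖f − q‖_{1,cheb} ∈ Q(1−x_1², 1−x_2², …, 1−x_n²)_{2r}. -/

import Mathlib

open Polynomial Finset

/-- The multivariate Chebyshev polynomial `T_α(x) = ∏ i, T_{α i}(x_i)`. -/
noncomputable def chebMv {n : ℕ} (α : Fin n → ℕ) : MvPolynomial (Fin n) ℝ :=
  ∏ i, Polynomial.aeval (MvPolynomial.X i) (Polynomial.Chebyshev.T ℝ (α i))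

/-- Membership in the truncated quadratic module `Q(1-x₁², …, 1-xₙ²)_r`. -/
def memCubeQM (n r : ℕ) (p : MvPolynomial (Fin n) ℝ) : Prop :=
  ∃ (σ₀ : MvPolynomial (Fin n) ℝ) (σ : Fin n → MvPolynomial (Fin n) ℝ),
    IsSumSq σ₀ ∧ (∀ i, IsSumSq (σ i)) ∧ σ₀.totalDegree ≤ r ∧
    (∀ i, (σ i).totalDegree ≤ r - 2) ∧
    p = σ₀ + ∑ i, (1 - MvPolynomial.X i ^ 2) * σ i

section Helpers
open Polynomial.Chebyshev

lemma natDegree_T_le : ∀ k : ℕ, (T ℝ k).natDegree ≤ k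
  | 0 => by simp [T_zero]
  | 1 => by simp [T_one]
  | (k+2) => by
    have h1 := natDegree_T_le (k+1)
    have h0 := natDegree_T_le k
    have : T ℝ ((k:ℤ)+2) = 2 * X * T ℝ (k+1) - T ℝ k := T_add_two ℝ k
    push_cast
    rw [this]
    refine (natDegree_sub_le _ _).trans ?_
    simp only [sup_le_iff]
    constructor
    · refine (natDegree_mul_le).trans ?_
      have : ((2:ℝ[X]) * X).natDegree ≤ 1 := by
        refine (natDegree_mul_le).trans ?_; simp
      push_cast at h1
      omega
    · omega


lemma natDegree_U_le : ∀ k : ℕ, (U ℝ k).natDegree ≤ k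
  | 0 => by simp [U_zero]
  | 1 => by simp [U_one]
  | (k+2) => by
    have h1 := natDegree_U_le (k+1)
    have h0 := natDegree_U_le k
    have : U ℝ ((k:ℤ)+2) = 2 * X * U ℝ (k+1) - U ℝ k := U_add_two ℝ k
    push_cast
    rw [this]
    refine (natDegree_sub_le _ _).trans ?_
    simp only [sup_le_iff]
    constructor
    · refine (natDegree_mul_le).trans ?_
      have : ((2:ℝ[X]) * X).natDegree ≤ 1 := by
        refine (natDegree_mul_le).trans ?_; simp
      push_cast at h1
      omega
    · omega

lemma coeff_T_self : ∀ k : ℕ, (T ℝ k).coeff k = 2^(k-1)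
  | 0 => by simp [T_zero]
  | 1 => by simp [T_one]
  | (k+2) => by
    have h1 := coeff_T_self (k+1)
    have h0 := natDegree_T_le k
    have e : T ℝ ((k:ℤ)+2) = 2 * X * T ℝ (k+1) - T ℝ k := T_add_two ℝ k
    push_cast
    rw [e, coeff_sub, coeff_eq_zero_of_natDegree_lt (by omega : (T ℝ (k:ℤ)).natDegree < k+2)]
    have e2 : (2 : ℝ[X]) * X * T ℝ ((k:ℤ)+1) = X * (2 * T ℝ ((k:ℤ)+1)) := by ring
    rw [e2, coeff_X_mul, coeff_ofNat_mul]
    push_cast at h1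
    rw [h1, sub_zero, pow_succ]; ring

lemma pellAB : ∀ k : ℕ, (T ℝ k)^2 + (1 - X^2) * (U ℝ ((k:ℤ)-1))^2 = 1 ∧
    T ℝ k * T ℝ ((k:ℤ)+1) + (1 - X^2) * (U ℝ ((k:ℤ)-1)) * U ℝ k = X
  | 0 => by constructor <;> simp [T_zero, T_one, U_neg_one, U_zero]
  | 1 => by
    have h2 : T ℝ ((1:ℤ)+1) = 2*X^2-1 := by norm_num [T_two]
    have h0 : U ℝ ((1:ℤ)-1) = 1 := by norm_num [U_zero]
    constructor
    · simp only [Nat.cast_one, T_one, h0]; ring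
    · simp only [Nat.cast_one, T_one, h0, h2, U_one]; ring
  | (k+2) => by
    obtain ⟨A1, B1⟩ := pellAB (k+1)
    obtain ⟨A0, B0⟩ := pellAB k
    push_cast at A1 B1 A0 B0 ⊢
    rw [show ((k:ℤ)+1-1) = (k:ℤ) by ring] at A1 B1
    rw [show ((k:ℤ)+1+1) = (k:ℤ)+2 by ring] at B1
    rw [show ((k:ℤ)+2-1) = (k:ℤ)+1 by ring]
    rw [show ((k:ℤ)+2+1) = (k:ℤ)+3 by ring]
    have tT : T ℝ ((k:ℤ)+2) = 2 * X * T ℝ ((k:ℤ)+1) - T ℝ k := T_add_two ℝ k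
    have tT3 : T ℝ ((k:ℤ)+3) = 2 * X * T ℝ ((k:ℤ)+2) - T ℝ ((k:ℤ)+1) := by
      have h := T_add_two ℝ ((k:ℤ)+1)
      rw [show ((k:ℤ)+1+2) = (k:ℤ)+3 by ring, show ((k:ℤ)+1+1) = (k:ℤ)+2 by ring] at h
      exact h
    have tU : U ℝ ((k:ℤ)+1) = 2 * X * U ℝ (k:ℤ) - U ℝ ((k:ℤ)-1) := by
      have h := U_add_two ℝ ((k:ℤ)-1)
      rw [show ((k:ℤ)-1+2) = (k:ℤ)+1 by ring, show ((k:ℤ)-1+1) = (k:ℤ) by ring] at h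
      exact h
    have tU2 : U ℝ ((k:ℤ)+2) = 2 * X * U ℝ ((k:ℤ)+1) - U ℝ (k:ℤ) := U_add_two ℝ k
    have hA2 : (T ℝ ((k:ℤ)+2))^2 + (1 - X^2) * (U ℝ ((k:ℤ)+1))^2 = 1 := by
      rw [tT, tU]
      linear_combination (4*X^2:ℝ[X]) * A1 - (4*X:ℝ[X]) * B0 + A0
    refine ⟨hA2, ?_⟩
    rw [tT3, tU2]
    linear_combination (2*X:ℝ[X]) * hA2 - B1

lemma pellA (k : ℕ) : (Polynomial.Chebyshev.T ℝ k)^2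
    + (1 - X^2) * (Polynomial.Chebyshev.U ℝ ((k:ℤ)-1))^2 = 1 := (pellAB k).1

end Helpers

lemma prod_monomial {n : ℕ} (s : Finset (Fin n)) (d : Fin n → (Fin n →₀ ℕ)) (c : Fin n → ℝ) :
    ∏ i ∈ s, MvPolynomial.monomial (d i) (c i)
      = MvPolynomial.monomial (∑ i ∈ s, d i) (∏ i ∈ s, c i) := by
  induction s using Finset.cons_induction with
  | empty => simp
  | cons a s ha ih =>
      rw [Finset.prod_cons, Finset.sum_cons, Finset.prod_cons, ih,
        MvPolynomial.monomial_mul]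

lemma sum_single_apply {n : ℕ} (p : Fin n → ℕ) (j : Fin n) :
    (∑ i, Finsupp.single i (p i)) j = p j := by
  rw [Finsupp.finset_sum_apply]
  simp_rw [Finsupp.single_apply]
  rw [Finset.sum_ite_eq' univ j p]
  simp

lemma coeff_chebMv {n : ℕ} (α : Fin n → ℕ) (β : Fin n →₀ ℕ) :
    MvPolynomial.coeff β (chebMv α) = ∏ i, (Polynomial.Chebyshev.T ℝ (α i)).coeff (β i) := by
  have expand : chebMv α
      = ∑ p ∈ Fintype.piFinset (fun i => range (α i + 1)),
          MvPolynomial.monomial (∑ i, Finsupp.single i (p i))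
            (∏ i, (Polynomial.Chebyshev.T ℝ (α i)).coeff (p i)) := by
    rw [chebMv]
    have : ∀ i : Fin n, (Polynomial.aeval (MvPolynomial.X i) (Polynomial.Chebyshev.T ℝ (α i)) : MvPolynomial (Fin n) ℝ)
        = ∑ k ∈ range (α i + 1), MvPolynomial.monomial (Finsupp.single i k) ((Polynomial.Chebyshev.T ℝ (α i)).coeff k) := by
      intro i
      rw [Polynomial.aeval_eq_sum_range' (Nat.lt_succ_of_le (natDegree_T_le (α i)))]
      refine Finset.sum_congr rfl fun k _ => ?_
      rw [MvPolynomial.X_pow_eq_monomial, MvPolynomial.smul_monomial, smul_eq_mul, mul_one]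
    simp_rw [this]
    rw [Finset.prod_univ_sum]
    exact Finset.sum_congr rfl fun p _ => prod_monomial _ _ _
  rw [expand, MvPolynomial.coeff_sum]
  simp_rw [MvPolynomial.coeff_monomial]
  have hcond : ∀ p : Fin n → ℕ, ((∑ i, Finsupp.single i (p i)) = β) ↔ p = ⇑β := by
    intro p
    constructor
    · intro h; funext j; rw [← sum_single_apply p j, h]
    · intro h; ext j; rw [sum_single_apply p j, h]
  simp_rw [hcond]
  rw [Finset.sum_ite_eq' (Fintype.piFinset (fun i => range (α i + 1))) (⇑β)
    (fun p => ∏ i, (Polynomial.Chebyshev.T ℝ (α i)).coeff (p i))]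
  by_cases hmem : (⇑β) ∈ Fintype.piFinset (fun i => range (α i + 1))
  · rw [if_pos hmem]
  · rw [if_neg hmem]
    rw [Fintype.mem_piFinset] at hmem
    push_neg at hmem
    obtain ⟨i, hi⟩ := hmem
    rw [Finset.mem_range, not_lt] at hi
    refine (Finset.prod_eq_zero (Finset.mem_univ i) ?_).symm
    exact Polynomial.coeff_eq_zero_of_natDegree_lt (lt_of_le_of_lt (natDegree_T_le (α i)) hi)

lemma totalDegree_aeval_X_le {n : ℕ} (i : Fin n) (p : ℝ[X]) :
    (Polynomial.aeval (MvPolynomial.X i) p : MvPolynomial (Fin n) ℝ).totalDegree ≤ p.natDegree := by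
  rw [Polynomial.aeval_eq_sum_range]
  refine MvPolynomial.totalDegree_finsetSum_le fun k hk => ?_
  refine (MvPolynomial.totalDegree_smul_le _ _).trans ?_
  rw [MvPolynomial.totalDegree_X_pow]
  exact Nat.lt_succ_iff.mp (Finset.mem_range.mp hk)

lemma totalDegree_chebMv_le {n : ℕ} (α : Fin n → ℕ) :
    (chebMv α).totalDegree ≤ ∑ i, α i := by
  refine (MvPolynomial.totalDegree_finset_prod _ _).trans ?_
  exact Finset.sum_le_sum fun i _ => (totalDegree_aeval_X_le i _).trans (natDegree_T_le (α i))

lemma support_sum_le {n : ℕ} (c : (Fin n → ℕ) →₀ ℝ) :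
    ∀ α ∈ c.support, ∑ i, α i ≤ (∑ β ∈ c.support, c β • chebMv β).totalDegree := by
  intro α hα
  obtain ⟨β, hβmem, hβmax⟩ := Finset.exists_max_image c.support (fun γ => ∑ i, γ i) ⟨α, hα⟩
  refine le_trans (hβmax α hα) ?_
  set B : Fin n →₀ ℕ := Finsupp.equivFunOnFinite.symm β with hB
  have hBa : ∀ i, B i = β i := fun i => rfl
  have hcoeff : MvPolynomial.coeff B (∑ γ ∈ c.support, c γ • chebMv γ)
      = c β * ∏ i, (Polynomial.Chebyshev.T ℝ (β i)).coeff (β i) := by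
    rw [MvPolynomial.coeff_sum]
    simp_rw [MvPolynomial.coeff_smul, smul_eq_mul, coeff_chebMv]
    rw [Finset.sum_eq_single β]
    · rfl
    · intro γ hγ hne
      rcases em (∃ i, γ i < β i) with ⟨i, hi⟩ | hno
      · refine mul_eq_zero_of_right _ (Finset.prod_eq_zero (Finset.mem_univ i) ?_)
        exact Polynomial.coeff_eq_zero_of_natDegree_lt
          (lt_of_le_of_lt (natDegree_T_le (γ i)) hi)
      · push_neg at hno
        exfalso
        apply hne
        funext i
        by_contra hne2
        have hlt : β i < γ i := lt_of_le_of_ne (hno i) (Ne.symm hne2)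
        have h3 : ∑ j, β j < ∑ j, γ j :=
          Finset.sum_lt_sum (fun j _ => hno j) ⟨i, Finset.mem_univ i, hlt⟩
        have h2 : ∑ j, γ j ≤ ∑ j, β j := hβmax γ hγ
        omega
    · intro h; exact absurd hβmem h
  have hne0 : MvPolynomial.coeff B (∑ γ ∈ c.support, c γ • chebMv γ) ≠ 0 := by
    rw [hcoeff]
    refine mul_ne_zero (Finsupp.mem_support_iff.mp hβmem) ?_
    refine Finset.prod_ne_zero_iff.mpr fun i _ => ?_
    rw [coeff_T_self]
    positivity
  have := MvPolynomial.le_totalDegree (MvPolynomial.mem_support_iff.mpr hne0)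
  refine le_trans (le_of_eq ?_) this
  rw [Finsupp.sum_fintype _ _ (fun _ => rfl)]
  rfl

lemma isSumSq_sq_mul {R : Type*} [CommRing R] (a : R) {s : R} (h : IsSumSq s) :
    IsSumSq (a^2 * s) := by
  induction h with
  | zero => simpa using IsSumSq.zero
  | @sq_add b t ht ih =>
      have : a^2 * (b * b + t) = (a*b) * (a*b) + a^2 * t := by ring
      rw [this]
      exact IsSumSq.sq_add _ ih

lemma isSumSq_sq {R : Type*} [CommRing R] (a : R) : IsSumSq (a^2) := by
  have h := IsSumSq.sq_add a IsSumSq.zero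
  rw [add_zero] at h
  rw [pow_two]
  exact h

lemma isSumSq_C_mul_sq {n : ℕ} {t : ℝ} (ht : 0 ≤ t) (y : MvPolynomial (Fin n) ℝ) :
    IsSumSq (MvPolynomial.C t * y^2) := by
  have : MvPolynomial.C t * y^2 = (MvPolynomial.C (Real.sqrt t) * y)^2 := by
    rw [mul_pow, ← map_pow, Real.sq_sqrt ht]
  rw [this]; exact isSumSq_sq _

lemma memCubeQM_zero (n r : ℕ) : memCubeQM n r 0 :=
  ⟨0, fun _ => 0, IsSumSq.zero, fun _ => IsSumSq.zero, by simp, fun _ => by simp, by simp⟩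

lemma memCubeQM_add {n r : ℕ} {p q : MvPolynomial (Fin n) ℝ}
    (hp : memCubeQM n r p) (hq : memCubeQM n r q) : memCubeQM n r (p + q) := by
  obtain ⟨a, b, ha, hb, hda, hdb, hep⟩ := hp
  obtain ⟨a', b', ha', hb', hda', hdb', heq⟩ := hq
  refine ⟨a + a', fun i => b i + b' i, ha.add ha', fun i => (hb i).add (hb' i),
    (MvPolynomial.totalDegree_add _ _).trans (max_le hda hda'),
    fun i => (MvPolynomial.totalDegree_add _ _).trans (max_le (hdb i) (hdb' i)), ?_⟩
  rw [hep, heq]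
  simp_rw [mul_add]
  rw [Finset.sum_add_distrib]
  ring

lemma memCubeQM_mono {n r r' : ℕ} (h : r ≤ r') {p : MvPolynomial (Fin n) ℝ}
    (hp : memCubeQM n r p) : memCubeQM n r' p := by
  obtain ⟨a, b, ha, hb, hda, hdb, hep⟩ := hp
  exact ⟨a, b, ha, hb, hda.trans h, fun i => (hdb i).trans (Nat.sub_le_sub_right h 2), hep⟩

lemma memCubeQM_C_mul {n r : ℕ} {t : ℝ} (ht : 0 ≤ t) {p : MvPolynomial (Fin n) ℝ}
    (hp : memCubeQM n r p) : memCubeQM n r (MvPolynomial.C t * p) := by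
  obtain ⟨a, b, ha, hb, hda, hdb, hep⟩ := hp
  have hC : ∀ q : MvPolynomial (Fin n) ℝ, IsSumSq q → IsSumSq (MvPolynomial.C t * q) := by
    intro q hq
    have : MvPolynomial.C t * q = (MvPolynomial.C (Real.sqrt t))^2 * q := by
      rw [← map_pow, Real.sq_sqrt ht]
    rw [this]; exact isSumSq_sq_mul _ hq
  have hdC : ∀ q : MvPolynomial (Fin n) ℝ, (MvPolynomial.C t * q).totalDegree ≤ q.totalDegree := by
    intro q
    refine (MvPolynomial.totalDegree_mul _ _).trans ?_
    simp [MvPolynomial.totalDegree_C]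
  refine ⟨MvPolynomial.C t * a, fun i => MvPolynomial.C t * b i, hC a ha, fun i => hC _ (hb i),
    (hdC a).trans hda, fun i => (hdC _).trans (hdb i), ?_⟩
  rw [hep, mul_add, Finset.mul_sum]
  congr 1
  exact Finset.sum_congr rfl fun i _ => by ring

lemma memCubeQM_sum {n r : ℕ} {ι : Type*} (s : Finset ι) (f : ι → MvPolynomial (Fin n) ℝ)
    (h : ∀ i ∈ s, memCubeQM n r (f i)) : memCubeQM n r (∑ i ∈ s, f i) := by
  induction s using Finset.cons_induction with
  | empty => simpa using memCubeQM_zero n r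
  | cons a s ha ih =>
      rw [Finset.sum_cons]
      exact memCubeQM_add (h a (Finset.mem_cons_self a s))
        (ih fun i hi => h i (Finset.mem_cons.mpr (Or.inr hi)))

/-- prefix products -/
def prefProd {R : Type*} [CommRing R] {n : ℕ} (a : Fin n → R) (k : ℕ) : R :=
  ∏ j ∈ univ.filter (fun j : Fin n => (j:ℕ) < k), a j

lemma prefProd_zero {R : Type*} [CommRing R] {n : ℕ} (a : Fin n → R) : prefProd a 0 = 1 := by
  simp [prefProd]

lemma prefProd_top {R : Type*} [CommRing R] {n : ℕ} (a : Fin n → R) : prefProd a n = ∏ i, a i := by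
  rw [prefProd]
  congr 1
  ext j; simp [j.isLt]

lemma prefProd_succ {R : Type*} [CommRing R] {n : ℕ} (a : Fin n → R) (i : Fin n) :
    prefProd a ((i:ℕ)+1) = prefProd a i * a i := by
  rw [prefProd, prefProd]
  have hset : univ.filter (fun j : Fin n => (j:ℕ) < (i:ℕ)+1)
      = insert i (univ.filter (fun j : Fin n => (j:ℕ) < (i:ℕ))) := by
    ext j
    simp only [Finset.mem_filter, Finset.mem_univ, true_and, Finset.mem_insert]
    constructor
    · intro hj
      rcases Nat.lt_succ_iff_lt_or_eq.mp hj with h' | h'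
      · exact Or.inr h'
      · exact Or.inl (Fin.ext h')
    · rintro (rfl | hj)
      · omega
      · omega
  rw [hset, Finset.prod_insert (by simp)]
  ring

lemma prefProd_sq {R : Type*} [CommRing R] {n : ℕ} (a : Fin n → R) (k : ℕ) :
    prefProd (fun i => a i ^ 2) k = (prefProd a k) ^ 2 := by
  rw [prefProd, prefProd, ← Finset.prod_pow]

lemma tele_fin {R : Type*} [CommRing R] {n : ℕ} (a : Fin n → R) :
    ∑ i : Fin n, (prefProd a (i:ℕ))^2 * (1 - (a i)^2) = 1 - (∏ i, a i)^2 := by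
  have step : ∀ i : Fin n, (prefProd a (i:ℕ))^2 * (1 - (a i)^2)
      = prefProd (fun j => a j ^ 2) (i:ℕ) - prefProd (fun j => a j ^ 2) ((i:ℕ)+1) := by
    intro i
    rw [prefProd_succ (fun j => a j ^ 2) i, prefProd_sq]
    ring
  simp_rw [step]
  rw [Fin.sum_univ_eq_sum_range
    (fun k => prefProd (fun j => a j ^ 2) k - prefProd (fun j => a j ^ 2) (k+1)) n]
  rw [Finset.sum_range_sub' (fun k => prefProd (fun j => a j ^ 2) k)]
  rw [prefProd_zero, prefProd_top, ← Finset.prod_pow]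


noncomputable def chA {n : ℕ} (α : Fin n → ℕ) (i : Fin n) : MvPolynomial (Fin n) ℝ :=
  Polynomial.aeval (MvPolynomial.X i) (Polynomial.Chebyshev.T ℝ (α i))

noncomputable def chW {n : ℕ} (α : Fin n → ℕ) (i : Fin n) : MvPolynomial (Fin n) ℝ :=
  Polynomial.aeval (MvPolynomial.X i) (Polynomial.Chebyshev.U ℝ ((α i : ℤ) - 1))

lemma pell_mv {n : ℕ} (α : Fin n → ℕ) (i : Fin n) :
    (chA α i)^2 + (1 - MvPolynomial.X i^2) * (chW α i)^2 = 1 := by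
  have h := congrArg (Polynomial.aeval (MvPolynomial.X i) :
    ℝ[X] →ₐ[ℝ] MvPolynomial (Fin n) ℝ) (pellA (α i))
  simp only [map_add, map_mul, map_pow, map_sub, map_one, Polynomial.aeval_X] at h
  exact h

lemma chW_degree {n : ℕ} (α : Fin n → ℕ) (i : Fin n) :
    (chW α i).totalDegree ≤ α i - 1 := by
  by_cases hzero : α i = 0
  · rw [chW]
    simp only [hzero, Nat.cast_zero, zero_sub]
    rw [Polynomial.Chebyshev.U_neg_one]
    simp
  · rw [chW]
    have hcast : ((α i : ℤ) - 1) = ((α i - 1 : ℕ) : ℤ) := by omega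
    rw [hcast]
    exact (totalDegree_aeval_X_le i _).trans (natDegree_U_le (α i - 1))

lemma piece {n : ℕ} (m : ℕ) (α : Fin n → ℕ) (s : ℝ) (hs : s^2 = 1) (h : ∑ i, α i ≤ m) :
    memCubeQM n (2*m) (1 + MvPolynomial.C s * chebMv α) := by
  classical
  have pell := pell_mv α
  have hcheb : chebMv α = ∏ i, chA α i := rfl
  -- the telescoping identity
  have key : ∑ i : Fin n, (1 - MvPolynomial.X i^2) * ((chW α i * prefProd (chA α) (i:ℕ))^2)
      = 1 - chebMv α ^2 := by
    rw [hcheb, ← tele_fin (chA α)]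
    refine Finset.sum_congr rfl fun i _ => ?_
    have h1 : (1 : MvPolynomial (Fin n) ℝ) - (chA α i)^2
        = (1 - MvPolynomial.X i^2) * (chW α i)^2 := by
      linear_combination (pell i).symm
    rw [h1]
    ring
  refine ⟨MvPolynomial.C (1/2 : ℝ) * (1 + MvPolynomial.C s * chebMv α)^2,
    fun i => MvPolynomial.C (1/2 : ℝ) * ((chW α i * prefProd (chA α) (i:ℕ))^2),
    isSumSq_C_mul_sq (by norm_num) _, fun i => isSumSq_C_mul_sq (by norm_num) _, ?_, ?_, ?_⟩
  · -- degree of σ₀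
    refine (MvPolynomial.totalDegree_mul _ _).trans ?_
    rw [MvPolynomial.totalDegree_C, zero_add]
    refine (MvPolynomial.totalDegree_pow _ _).trans ?_
    have : (1 + MvPolynomial.C s * chebMv α).totalDegree ≤ m := by
      refine (MvPolynomial.totalDegree_add _ _).trans (max_le (by simp) ?_)
      refine (MvPolynomial.totalDegree_mul _ _).trans ?_
      rw [MvPolynomial.totalDegree_C, zero_add]
      exact (totalDegree_chebMv_le α).trans h
    omega
  · -- degree of σ i
    intro i
    show (MvPolynomial.C (1/2:ℝ) * ((chW α i * prefProd (chA α) (i:ℕ))^2)).totalDegree ≤ 2*m-2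
    by_cases hzero : α i = 0
    · have hw0 : chW α i = 0 := by
        rw [chW]
        simp only [hzero, Nat.cast_zero, zero_sub]
        rw [Polynomial.Chebyshev.U_neg_one]
        simp
      rw [hw0]
      simp
    · refine (MvPolynomial.totalDegree_mul _ _).trans ?_
      rw [MvPolynomial.totalDegree_C, zero_add]
      refine le_trans (MvPolynomial.totalDegree_pow _ _) ?_
      have hwdeg := chW_degree α i
      have hPdeg : (prefProd (chA α) (i:ℕ)).totalDegree
          ≤ ∑ j ∈ univ.filter (fun j : Fin n => (j:ℕ) < (i:ℕ)), α j := by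
        rw [prefProd]
        refine (MvPolynomial.totalDegree_finset_prod _ _).trans ?_
        refine Finset.sum_le_sum fun j _ => ?_
        exact (totalDegree_aeval_X_le j _).trans (natDegree_T_le (α j))
      have hsub : ∑ j ∈ univ.filter (fun j : Fin n => (j:ℕ) < (i:ℕ)), α j + α i ≤ ∑ j, α j := by
        have hss : univ.filter (fun j : Fin n => (j:ℕ) < (i:ℕ)) ∪ {i} ⊆ univ := by
          intro x _; exact Finset.mem_univ x
        have hdisj : Disjoint (univ.filter (fun j : Fin n => (j:ℕ) < (i:ℕ))) {i} := by
          simp only [Finset.disjoint_singleton_right, Finset.mem_filter]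
          omega
        calc ∑ j ∈ univ.filter (fun j : Fin n => (j:ℕ) < (i:ℕ)), α j + α i
            = ∑ j ∈ univ.filter (fun j : Fin n => (j:ℕ) < (i:ℕ)) ∪ {i}, α j := by
              rw [Finset.sum_union hdisj, Finset.sum_singleton]
          _ ≤ ∑ j, α j := Finset.sum_le_sum_of_subset hss
      have hmul := (MvPolynomial.totalDegree_mul (chW α i) (prefProd (chA α) (i:ℕ))).trans
        (add_le_add hwdeg hPdeg)
      omega
  · -- the identity
    have hcs : (MvPolynomial.C s : MvPolynomial (Fin n) ℝ)^2 = 1 := by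
      rw [← map_pow, hs, map_one]
    have hsum : ∑ i : Fin n, (1 - MvPolynomial.X i ^ 2)
        * (MvPolynomial.C (1/2 : ℝ) * ((chW α i * prefProd (chA α) (i:ℕ))^2))
        = MvPolynomial.C (1/2 : ℝ) * (1 - chebMv α ^2) := by
      rw [← key, Finset.mul_sum]
      exact Finset.sum_congr rfl fun i _ => by ring
    rw [hsum]
    have hhalf : (MvPolynomial.C (1/2:ℝ) : MvPolynomial (Fin n) ℝ) * 2 = 1 := by
      rw [show (2 : MvPolynomial (Fin n) ℝ) = MvPolynomial.C 2 from (map_ofNat _ 2).symm,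
        ← map_mul]
      norm_num
    linear_combination (-(1 + MvPolynomial.C s * chebMv α)) * hhalf
      + (-(MvPolynomial.C (1/2:ℝ) * chebMv α ^ 2)) * hcs

lemma isSumSq_C {n : ℕ} {t : ℝ} (ht : 0 ≤ t) :
    IsSumSq (MvPolynomial.C t : MvPolynomial (Fin n) ℝ) := by
  have := isSumSq_C_mul_sq (n := n) ht 1
  simpa using this

lemma sum_eq_two_cases {n : ℕ} (α : Fin n → ℕ) (h2 : ∑ i, α i = 2) :
    (∃ i, α i = 2 ∧ ∀ j, j ≠ i → α j = 0) ∨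
    (∃ i j, i ≠ j ∧ α i = 1 ∧ α j = 1 ∧ ∀ k, k ≠ i → k ≠ j → α k = 0) := by
  have hpair : ∀ i j : Fin n, i ≠ j → α i + α j ≤ 2 := by
    intro i j hij
    calc α i + α j = ∑ k ∈ {i, j}, α k := by rw [Finset.sum_pair hij]
      _ ≤ ∑ k, α k := Finset.sum_le_sum_of_subset (Finset.subset_univ _)
      _ = 2 := h2
  have htrip : ∀ i j k : Fin n, i ≠ j → i ≠ k → j ≠ k → α i + α j + α k ≤ 2 := by
    intro i j k hij hik hjk
    have : ({i, j, k} : Finset (Fin n)).sum α = α i + α j + α k := by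
      rw [Finset.sum_insert (by simp [hij, hik]), Finset.sum_pair hjk, add_assoc]
    calc α i + α j + α k = ∑ l ∈ {i, j, k}, α l := this.symm
      _ ≤ ∑ l, α l := Finset.sum_le_sum_of_subset (Finset.subset_univ _)
      _ = 2 := h2
  have hle : ∀ i, α i ≤ 2 := by
    intro i
    calc α i ≤ ∑ k, α k := Finset.single_le_sum (fun _ _ => Nat.zero_le _) (Finset.mem_univ i)
      _ = 2 := h2
  obtain ⟨i, hi⟩ : ∃ i, α i ≠ 0 := by
    by_contra hno
    push_neg at hno
    rw [Finset.sum_congr rfl (fun j _ => hno j)] at h2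
    simp at h2
  rcases Nat.lt_or_ge (α i) 2 with hlt | hge
  · -- α i = 1
    have hi1 : α i = 1 := by omega
    have : ∑ j ∈ univ.erase i, α j = 1 := by
      have := Finset.add_sum_erase univ α (Finset.mem_univ i)
      omega
    obtain ⟨j, hjmem, hj⟩ : ∃ j ∈ univ.erase i, α j ≠ 0 := by
      by_contra hno
      push_neg at hno
      rw [Finset.sum_congr rfl hno] at this
      simp at this
    have hji : j ≠ i := (Finset.mem_erase.mp hjmem).1
    have hj1 : α j = 1 := by have := hpair i j (Ne.symm hji); omega
    refine Or.inr ⟨i, j, Ne.symm hji, hi1, hj1, fun k hki hkj => ?_⟩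
    have := htrip i j k (Ne.symm hji) (Ne.symm hki) (Ne.symm hkj)
    omega
  · have hi2 : α i = 2 := le_antisymm (hle i) hge
    refine Or.inl ⟨i, hi2, fun j hj => ?_⟩
    have := hpair i j (Ne.symm hj)
    omega

lemma chebMv_single_two {n : ℕ} (α : Fin n → ℕ) (i : Fin n) (hi : α i = 2)
    (h0 : ∀ j, j ≠ i → α j = 0) :
    chebMv α = 2 * MvPolynomial.X i ^ 2 - 1 := by
  rw [chebMv, Finset.prod_eq_single i]
  · rw [hi]
    rw [show ((2:ℕ):ℤ) = 2 from rfl, Polynomial.Chebyshev.T_two]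
    simp [map_ofNat]
  · intro j _ hj
    rw [h0 j hj]
    simp [Polynomial.Chebyshev.T_zero]
  · intro h; exact absurd (Finset.mem_univ i) h

lemma chebMv_pair_one {n : ℕ} (α : Fin n → ℕ) (i j : Fin n) (hij : i ≠ j)
    (hi : α i = 1) (hj : α j = 1) (h0 : ∀ k, k ≠ i → k ≠ j → α k = 0) :
    chebMv α = MvPolynomial.X i * MvPolynomial.X j := by
  rw [chebMv]
  rw [← Finset.prod_subset (Finset.subset_univ ({i, j} : Finset (Fin n)))]
  · rw [Finset.prod_pair hij, hi, hj]
    simp [Polynomial.Chebyshev.T_one]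
  · intro k _ hk
    simp only [Finset.mem_insert, Finset.mem_singleton] at hk
    push_neg at hk
    rw [h0 k hk.1 hk.2]
    simp [Polynomial.Chebyshev.T_zero]

lemma piece2 {n : ℕ} (α : Fin n → ℕ) (s : ℝ) (hs : s^2 = 1) (h : ∑ i, α i ≤ 2) :
    memCubeQM n 2 (1 + MvPolynomial.C s * chebMv α) := by
  classical
  rcases Nat.lt_or_ge (∑ i, α i) 2 with hlt | hge
  · have := piece 1 α s hs (by omega)
    simpa using this
  · have h2 : ∑ i, α i = 2 := le_antisymm h hge
    have hs' : s = 1 ∨ s = -1 := by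
      have hmul : s * s = 1 := by rw [← pow_two]; exact hs
      exact mul_self_eq_one_iff.mp hmul
    rcases sum_eq_two_cases α h2 with ⟨i, hi2, h0⟩ | ⟨i, j, hij, hi1, hj1, h0⟩
    · rw [chebMv_single_two α i hi2 h0]
      rcases hs' with rfl | rfl
      · -- 1 + (2X² - 1) = 2X²
        refine ⟨MvPolynomial.C 2 * MvPolynomial.X i ^ 2, fun _ => 0,
          isSumSq_C_mul_sq (by norm_num) _, fun _ => IsSumSq.zero, ?_, fun _ => by simp, ?_⟩
        · refine (MvPolynomial.totalDegree_mul _ _).trans ?_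
          simp [MvPolynomial.totalDegree_C, MvPolynomial.totalDegree_X_pow]
        · simp only [map_one, one_mul, mul_zero, Finset.sum_const_zero, add_zero]
          rw [show (MvPolynomial.C (2:ℝ) : MvPolynomial (Fin n) ℝ) = 2 from map_ofNat _ 2]
          ring
      · -- 1 - (2X² - 1) = (1 - X²) * 2
        refine ⟨0, fun k => if k = i then MvPolynomial.C 2 else 0,
          IsSumSq.zero, ?_, by simp, ?_, ?_⟩
        · intro k
          dsimp only
          rcases eq_or_ne k i with rfl | hk
          · rw [if_pos rfl]; exact isSumSq_C (by norm_num)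
          · rw [if_neg hk]; exact IsSumSq.zero
        · intro k
          dsimp only
          rcases eq_or_ne k i with rfl | hk
          · rw [if_pos rfl]; simp [MvPolynomial.totalDegree_C]
          · rw [if_neg hk]; simp
        · simp_rw [mul_ite, mul_zero]
          rw [Finset.sum_ite_eq' univ i (fun k => (1 - MvPolynomial.X k ^ 2) * MvPolynomial.C 2)]
          simp only [Finset.mem_univ, if_true, zero_add]
          rw [show (MvPolynomial.C (2:ℝ) : MvPolynomial (Fin n) ℝ) = 2 from map_ofNat _ 2,
            map_neg, map_one]
          ring
    · rw [chebMv_pair_one α i j hij hi1 hj1 h0]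
      refine ⟨MvPolynomial.C (1/2 : ℝ) * (MvPolynomial.X i + MvPolynomial.C s * MvPolynomial.X j)^2,
        fun k => if k = i then MvPolynomial.C (1/2 : ℝ) else if k = j then MvPolynomial.C (1/2:ℝ) else 0,
        isSumSq_C_mul_sq (by norm_num) _, ?_, ?_, ?_, ?_⟩
      · intro k
        dsimp only
        rcases eq_or_ne k i with rfl | hk
        · rw [if_pos rfl]; exact isSumSq_C (by norm_num)
        · rw [if_neg hk]
          rcases eq_or_ne k j with rfl | hk'
          · rw [if_pos rfl]; exact isSumSq_C (by norm_num)
          · rw [if_neg hk']; exact IsSumSq.zero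
      · refine (MvPolynomial.totalDegree_mul _ _).trans ?_
        rw [MvPolynomial.totalDegree_C, zero_add]
        refine (MvPolynomial.totalDegree_pow _ _).trans ?_
        have : (MvPolynomial.X i + MvPolynomial.C s * MvPolynomial.X j :
            MvPolynomial (Fin n) ℝ).totalDegree ≤ 1 := by
          refine (MvPolynomial.totalDegree_add _ _).trans (max_le ?_ ?_)
          · exact le_of_eq (MvPolynomial.totalDegree_X i)
          · refine (MvPolynomial.totalDegree_mul _ _).trans ?_
            simp [MvPolynomial.totalDegree_C, MvPolynomial.totalDegree_X]
        omega
      · intro k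
        dsimp only
        rcases eq_or_ne k i with rfl | hk
        · rw [if_pos rfl]; simp [MvPolynomial.totalDegree_C]
        · rw [if_neg hk]
          rcases eq_or_ne k j with rfl | hk'
          · rw [if_pos rfl]; simp [MvPolynomial.totalDegree_C]
          · rw [if_neg hk']; simp
      · have hsplit : ∀ k : Fin n, (1 - MvPolynomial.X k ^ 2)
            * (if k = i then MvPolynomial.C (1/2 : ℝ) else if k = j then MvPolynomial.C (1/2:ℝ) else 0)
            = (if k = i then (1 - MvPolynomial.X k ^ 2) * MvPolynomial.C (1/2 : ℝ) else 0)
              + (if k = j then (1 - MvPolynomial.X k ^ 2) * MvPolynomial.C (1/2 : ℝ) else 0) := by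
          intro k
          rcases eq_or_ne k i with rfl | hk
          · rw [if_pos rfl, if_pos rfl, if_neg hij]
            ring
          · rw [if_neg hk, if_neg hk]
            rcases eq_or_ne k j with rfl | hk'
            · rw [if_pos rfl, if_pos rfl]
              ring
            · rw [if_neg hk', if_neg hk']
              ring
        simp_rw [hsplit]
        rw [Finset.sum_add_distrib,
          Finset.sum_ite_eq' univ i (fun k => (1 - MvPolynomial.X k ^ 2) * MvPolynomial.C (1/2:ℝ)),
          Finset.sum_ite_eq' univ j (fun k => (1 - MvPolynomial.X k ^ 2) * MvPolynomial.C (1/2:ℝ))]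
        simp only [Finset.mem_univ, if_true]
        have hcs : (MvPolynomial.C s : MvPolynomial (Fin n) ℝ)^2 = 1 := by
          rw [← map_pow, hs, map_one]
        have hhalf : (MvPolynomial.C (1/2:ℝ) : MvPolynomial (Fin n) ℝ) * 2 = 1 := by
          rw [show (2 : MvPolynomial (Fin n) ℝ) = MvPolynomial.C 2 from (map_ofNat _ 2).symm,
            ← map_mul]
          norm_num
        linear_combination (-(1 + MvPolynomial.C s * MvPolynomial.X i * MvPolynomial.X j)) * hhalf
          + (-(MvPolynomial.C (1/2:ℝ) * MvPolynomial.X j ^ 2)) * hcs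

lemma totalDegree_one_sub_sq {n : ℕ} (i : Fin n) :
    ((1 : MvPolynomial (Fin n) ℝ) - MvPolynomial.X i ^ 2).totalDegree ≤ 2 := by
  have e : (1 : MvPolynomial (Fin n) ℝ) - MvPolynomial.X i ^ 2
      = 1 + MvPolynomial.C (-1 : ℝ) * MvPolynomial.X i ^ 2 := by
    rw [map_neg, map_one]; ring
  rw [e]
  refine (MvPolynomial.totalDegree_add _ _).trans (max_le (by simp) ?_)
  refine (MvPolynomial.totalDegree_mul _ _).trans ?_
  rw [MvPolynomial.totalDegree_C, zero_add]
  exact le_of_eq (MvPolynomial.totalDegree_X_pow i 2)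

lemma totalDegree_sub_le' {n : ℕ} (a b : MvPolynomial (Fin n) ℝ) :
    (a - b).totalDegree ≤ max a.totalDegree b.totalDegree := by
  have e : a - b = a + MvPolynomial.C (-1 : ℝ) * b := by rw [map_neg, map_one]; ring
  rw [e]
  refine (MvPolynomial.totalDegree_add _ _).trans (max_le_max le_rfl ?_)
  refine (MvPolynomial.totalDegree_mul _ _).trans ?_
  rw [MvPolynomial.totalDegree_C, zero_add]

lemma memCubeQM_totalDegree_le {n r : ℕ} {q : MvPolynomial (Fin n) ℝ}
    (hq : memCubeQM n r q) : q.totalDegree ≤ max r 2 := by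
  obtain ⟨a, b, _, _, hda, hdb, he⟩ := hq
  rw [he]
  refine (MvPolynomial.totalDegree_add _ _).trans
    (max_le (hda.trans (le_max_left _ _)) (MvPolynomial.totalDegree_finsetSum_le fun i _ => ?_))
  refine (MvPolynomial.totalDegree_mul _ _).trans ?_
  have h1 := totalDegree_one_sub_sq i
  have h2 := hdb i
  omega

lemma eq_C_of_totalDegree_eq_zero {n : ℕ} {p : MvPolynomial (Fin n) ℝ}
    (h : p.totalDegree = 0) : p = MvPolynomial.C (MvPolynomial.coeff 0 p) := by
  ext m
  rw [MvPolynomial.coeff_C]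
  rcases eq_or_ne (0 : Fin n →₀ ℕ) m with rfl | hm
  · rw [if_pos rfl]
  · rw [if_neg hm]
    by_contra hne
    have hmem : m ∈ p.support := MvPolynomial.mem_support_iff.mpr hne
    have := (MvPolynomial.totalDegree_eq_zero_iff (Fin n) p).mp h m hmem
    exact hm (Finsupp.ext fun x => (this x).trans rfl).symm

lemma isSumSq_aeval_ones {n : ℕ} {p : MvPolynomial (Fin n) ℝ} (h : IsSumSq p) :
    IsSumSq (MvPolynomial.aeval (fun _ : Fin n => (1:ℝ)) p) := by
  induction h with
  | zero => rw [map_zero]; exact IsSumSq.zero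
  | @sq_add a S pS ih =>
      rw [map_add, map_mul]
      exact IsSumSq.sq_add _ ih

lemma aeval_ones_chebMv {n : ℕ} (α : Fin n → ℕ) :
    MvPolynomial.aeval (fun _ : Fin n => (1:ℝ)) (chebMv α) = 1 := by
  rw [chebMv, map_prod]
  refine Finset.prod_eq_one fun i _ => ?_
  rw [show (MvPolynomial.aeval (fun _ : Fin n => (1:ℝ)))
      ((Polynomial.aeval (MvPolynomial.X i)) (Polynomial.Chebyshev.T ℝ (α i)))
      = Polynomial.aeval ((MvPolynomial.aeval (fun _ : Fin n => (1:ℝ))) (MvPolynomial.X i))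
        (Polynomial.Chebyshev.T ℝ (α i)) from (Polynomial.aeval_algHom_apply _ _ _).symm,
    MvPolynomial.aeval_X]
  have := Polynomial.Chebyshev.T_real_cos (0 : ℝ) (α i)
  rw [Real.cos_zero] at this
  rw [show Polynomial.aeval (1:ℝ) (Polynomial.Chebyshev.T ℝ (α i))
    = Polynomial.eval (1:ℝ) (Polynomial.Chebyshev.T ℝ (α i)) from rfl, this]
  simp

/-- If `q ∈ Q(1-x₁², …, 1-xₙ²)_r` and `r ≥ deg f`, then
`f + ‖f - q‖_{1,cheb} ∈ Q(1-x₁², …, 1-xₙ²)_{2r}`, where the Chebyshev expansion of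
`f - q` is `∑_α c_α T_α` and `‖f - q‖_{1,cheb} = ∑_α |c_α|`. -/
theorem add_chebNorm_mem_quadraticModule (n r : ℕ) (f q : MvPolynomial (Fin n) ℝ)
    (hq : memCubeQM n r q) (hr : f.totalDegree ≤ r)
    (c : (Fin n → ℕ) →₀ ℝ) (hc : f - q = ∑ α ∈ c.support, c α • chebMv α) :
    memCubeQM n (2 * r) (f + MvPolynomial.C (∑ α ∈ c.support, |c α|)) := by
  classical
  rcases Nat.eq_zero_or_pos r with rfl | hrpos
  · -- r = 0 : everything is constant
    set φ : MvPolynomial (Fin n) ℝ →ₐ[ℝ] ℝ := MvPolynomial.aeval (fun _ : Fin n => (1:ℝ)) with hφ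
    have hf0 : f = MvPolynomial.C (MvPolynomial.coeff 0 f) :=
      eq_C_of_totalDegree_eq_zero (Nat.le_zero.mp hr)
    set a : ℝ := MvPolynomial.coeff 0 f with ha
    obtain ⟨s0, s, hs0, _, _, _, heq⟩ := hq
    have hq1 : φ q = φ s0 := by
      rw [heq, map_add, map_sum]
      have : ∀ i : Fin n, φ ((1 - MvPolynomial.X i ^ 2) * s i) = 0 := by
        intro i
        rw [map_mul, map_sub, map_one, map_pow, MvPolynomial.aeval_X]
        norm_num
      rw [Finset.sum_congr rfl fun i _ => this i]
      simp
    have hq0 : 0 ≤ φ q := hq1 ▸ (isSumSq_aeval_ones hs0).nonneg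
    have hsum : a - φ q = ∑ α ∈ c.support, c α := by
      have := congrArg φ hc
      rw [map_sub, map_sum] at this
      simp only [hφ] at this ⊢
      simp only [MvPolynomial.smul_eq_C_mul, map_mul, MvPolynomial.aeval_C,
        aeval_ones_chebMv, mul_one, Algebra.algebraMap_self_apply] at this
      rw [← this]
      congr 1
      rw [hf0, MvPolynomial.aeval_C, Algebra.algebraMap_self_apply]
    have hpos : 0 ≤ a + ∑ α ∈ c.support, |c α| := by
      have h1 : -∑ α ∈ c.support, |c α| ≤ ∑ α ∈ c.support, c α := by
        rw [← Finset.sum_neg_distrib]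
        exact Finset.sum_le_sum fun α _ => neg_abs_le _
      linarith
    rw [hf0, ← map_add]
    refine ⟨MvPolynomial.C (a + ∑ α ∈ c.support, |c α|), fun _ => 0,
      isSumSq_C hpos, fun _ => IsSumSq.zero, le_of_eq (MvPolynomial.totalDegree_C _),
      fun _ => by simp, by simp⟩
  · -- r ≥ 1
    set sg : ℝ → ℝ := fun x => if 0 ≤ x then 1 else -1 with hsg
    have hsg_sq : ∀ x, (sg x)^2 = 1 := by
      intro x; rw [hsg]; dsimp only; split <;> norm_num
    have hsg_mul : ∀ x : ℝ, |x| * sg x = x := by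
      intro x; rw [hsg]; dsimp only
      split
      · rw [abs_of_nonneg ‹_›, mul_one]
      · rw [abs_of_neg (lt_of_not_ge ‹_›)]; ring
    have hdfq : (f - q).totalDegree ≤ max r 2 := by
      refine (totalDegree_sub_le' f q).trans ?_
      exact max_le (hr.trans (le_max_left _ _)) (memCubeQM_totalDegree_le hq)
    have hsupp : ∀ α ∈ c.support, ∑ i, α i ≤ max r 2 := by
      intro α hα
      refine (support_sum_le c α hα).trans ?_
      rw [← hc]; exact hdfq
    have hrepr : f + MvPolynomial.C (∑ α ∈ c.support, |c α|)
        = q + ∑ α ∈ c.support,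
            MvPolynomial.C |c α| * (1 + MvPolynomial.C (sg (c α)) * chebMv α) := by
      have hterm : ∀ α, MvPolynomial.C |c α| * (1 + MvPolynomial.C (sg (c α)) * chebMv α)
          = MvPolynomial.C |c α| + c α • chebMv α := by
        intro α
        rw [mul_add, mul_one, ← mul_assoc, ← map_mul, hsg_mul (c α),
          ← MvPolynomial.smul_eq_C_mul]
      simp_rw [hterm]
      rw [Finset.sum_add_distrib, ← map_sum, ← hc]
      ring
    rw [hrepr]
    refine memCubeQM_add (memCubeQM_mono (by omega) hq) (memCubeQM_sum _ _ fun α hα => ?_)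
    refine memCubeQM_C_mul (abs_nonneg _) ?_
    rcases le_or_gt 2 r with h2r | h2r
    · refine piece r α _ (hsg_sq _) ?_
      have := hsupp α hα
      omega
    · have hr1 : r = 1 := by omega
      subst hr1
      have := piece2 α _ (hsg_sq (c α)) (by have := hsupp α hα; omega)
      simpa using this
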